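/- Let F be a finite union-closed family of finite sets containing at least one nonempty set, and let k ≥ 1 be the minimum cardinality of a nonempty set in F. Then max_{a ∈ ⋃F} |F_a| ≥ s_k · |F| ≥ (log₂(k)/(2k)) · |F|. -/

import Mathlib

/-- A finite family of finite sets is union-closed if it is closed under pairwise unions. -/
def UnionClosed (F : Finset (Finset ℕ)) : Prop :=
  ∀ A ∈ F, ∀ B ∈ F, A ∪ B ∈ F

/-- The density of a union-closed family `F`:
`D(F) = (1/(n·|F|)) · Σ_{A ∈ F} |A|` where `n = |⋃F|`. -/
noncomputable def density (F : Finset (Finset ℕ)) : ℝ :=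
  (∑ A ∈ F, (A.card : ℝ)) / (((F.sup id).card : ℝ) * (F.card : ℝ))

/-- `minDensity n` is the minimum density over all union-closed families whose
union has exactly `n` elements. -/
noncomputable def minDensity (n : ℕ) : ℝ :=
  sInf {d : ℝ | ∃ F : Finset (Finset ℕ),
    UnionClosed F ∧ (F.sup id).card = n ∧ d = density F}

open Finset Real

lemma sup_mem {F : Finset (Finset ℕ)} (hF : UnionClosed F) (hne : F.Nonempty) :
    F.sup id ∈ F := by
  classical
  have key : ∀ G : Finset (Finset ℕ), G ⊆ F → G.Nonempty → G.sup id ∈ F := by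
    intro G
    induction G using Finset.induction_on with
    | empty => intro _ h; exact absurd rfl h.ne_empty
    | @insert a s hnotmem ih =>
      intro hsub hne2
      rcases s.eq_empty_or_nonempty with rfl | hs
      · simpa using hsub (by simp)
      · have ha : a ∈ F := hsub (by simp)
        have hs' : s ⊆ F := fun y hy => hsub (by simp [hy])
        have h1 := ih hs' hs
        have h2 : a ∪ s.sup id ∈ F := hF a ha _ h1
        simpa [Finset.sup_insert] using h2
  exact key F (by rfl) hne

lemma subset_sup {F : Finset (Finset ℕ)} {A : Finset ℕ} (hA : A ∈ F) : A ⊆ F.sup id :=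
  Finset.le_sup (f := id) hA

def pick (A B : Finset ℕ) : ℕ := if h : (B \ A).Nonempty then (B \ A).min' h else 0

lemma pick_mem {A B : Finset ℕ} (h : A ⊂ B) : pick A B ∈ B \ A := by
  have hne : (B \ A).Nonempty := by
    obtain ⟨x, hxB, hxA⟩ := Finset.exists_of_ssubset h
    exact ⟨x, Finset.mem_sdiff.2 ⟨hxB, hxA⟩⟩
  rw [pick, dif_pos hne]
  exact Finset.min'_mem _ _

def covers (F : Finset (Finset ℕ)) (A : Finset ℕ) : Finset (Finset ℕ) :=
  F.filter (fun B => A ⊂ B ∧ ∀ C ∈ F, A ⊂ C → ¬ C ⊂ B)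

lemma cover_exists {F : Finset (Finset ℕ)} {A B : Finset ℕ}
    (hB : B ∈ F) (hAB : A ⊂ B) : ∃ C ∈ covers F A, C ⊆ B := by
  classical
  set s := F.filter (fun C => A ⊂ C ∧ C ⊆ B) with hs
  have hBs : B ∈ s := by simp [hs, hB, hAB]
  obtain ⟨C, hCs, hmin⟩ := Finset.exists_min_image s Finset.card ⟨B, hBs⟩
  rw [hs, Finset.mem_filter] at hCs
  refine ⟨C, ?_, hCs.2.2⟩
  rw [covers, Finset.mem_filter]
  refine ⟨hCs.1, hCs.2.1, ?_⟩
  intro D hD hAD hDC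
  have hDs : D ∈ s := by
    rw [hs, Finset.mem_filter]
    exact ⟨hD, hAD, hDC.subset.trans hCs.2.2⟩
  exact absurd (Finset.card_lt_card hDC) (not_lt.2 (hmin D hDs))

def tr (F : Finset (Finset ℕ)) (A : Finset ℕ) : Finset ℕ :=
  (covers F A).image (pick A)

lemma tr_subset {F : Finset (Finset ℕ)} {A : Finset ℕ} :
    tr F A ⊆ F.sup id \ A := by
  intro x hx
  rw [tr, Finset.mem_image] at hx
  obtain ⟨B, hB, rfl⟩ := hx
  rw [covers, Finset.mem_filter] at hB
  have := pick_mem hB.2.1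
  rw [Finset.mem_sdiff] at this ⊢
  exact ⟨subset_sup hB.1 this.1, this.2⟩

lemma interior' {F : Finset (Finset ℕ)} (hF : UnionClosed F) {A B Z : Finset ℕ}
    (hA : A ∈ F) (hZ : Z ⊆ (F.sup id \ A) \ tr F A) (hB : B ∈ F) (hBX : B ⊆ A ∪ Z) :
    B ⊆ A := by
  by_contra hBA
  have hsub : A ⊂ A ∪ B := by
    refine Finset.ssubset_iff_of_subset Finset.subset_union_left |>.2 ?_
    obtain ⟨b, hb, hbA⟩ := Finset.not_subset.1 hBA
    exact ⟨b, Finset.mem_union_right _ hb, hbA⟩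
  obtain ⟨C, hC, hCB⟩ := cover_exists (hF A hA B hB) hsub
  have hCcov := hC
  rw [covers, Finset.mem_filter] at hC
  have hpick := pick_mem hC.2.1
  have hpickT : pick A C ∈ tr F A := Finset.mem_image_of_mem _ hCcov
  rw [Finset.mem_sdiff] at hpick
  have hpZ : pick A C ∈ Z := by
    have h1 : pick A C ∈ A ∪ B := hCB hpick.1
    have h2 : pick A C ∈ A ∪ Z := by
      rcases Finset.mem_union.1 h1 with h | h
      · exact absurd h hpick.2
      · exact hBX h
    rcases Finset.mem_union.1 h2 with h | h
    · exact absurd h hpick.2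
    · exact h
  have := hZ hpZ
  rw [Finset.mem_sdiff] at this
  exact this.2 hpickT

lemma sum_pow_le {F : Finset (Finset ℕ)} (hF : UnionClosed F) :
    ∑ A ∈ F, 2 ^ (((F.sup id \ A) \ tr F A).card) ≤ 2 ^ (F.sup id).card := by
  classical
  set U := F.sup id with hU
  set R : Finset ℕ → Finset (Finset ℕ) :=
    fun A => ((U \ A) \ tr F A).powerset.image (fun Z => A ∪ Z) with hR
  have hcard : ∀ A ∈ F, (R A).card = 2 ^ ((U \ A) \ tr F A).card := by
    intro A hA
    rw [hR]
    rw [Finset.card_image_of_injOn, Finset.card_powerset]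
    intro Z1 h1 Z2 h2 heq
    simp only [Finset.mem_coe, Finset.mem_powerset] at h1 h2
    have d1 : ∀ z ∈ Z1, z ∉ A := by
      intro z hz
      have := h1 hz; rw [Finset.mem_sdiff, Finset.mem_sdiff] at this; exact this.1.2
    have d2 : ∀ z ∈ Z2, z ∉ A := by
      intro z hz
      have := h2 hz; rw [Finset.mem_sdiff, Finset.mem_sdiff] at this; exact this.1.2
    ext z
    constructor
    · intro hz
      have : z ∈ A ∪ Z2 := by
        have hh : A ∪ Z1 = A ∪ Z2 := heq
        rw [← hh]; exact Finset.mem_union_right _ hz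
      rcases Finset.mem_union.1 this with h | h
      · exact absurd h (d1 z hz)
      · exact h
    · intro hz
      have : z ∈ A ∪ Z1 := by
        have hh : A ∪ Z1 = A ∪ Z2 := heq
        rw [hh]; exact Finset.mem_union_right _ hz
      rcases Finset.mem_union.1 this with h | h
      · exact absurd h (d2 z hz)
      · exact h
  have hmem : ∀ A ∈ F, R A ⊆ U.powerset := by
    intro A hA X hX
    rw [hR] at hX
    obtain ⟨Z, hZ, rfl⟩ := Finset.mem_image.1 hX
    rw [Finset.mem_powerset] at hZ ⊢
    refine Finset.union_subset (subset_sup hA) ?_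
    intro z hz
    have := hZ hz
    rw [Finset.mem_sdiff, Finset.mem_sdiff] at this
    exact this.1.1
  have hdisj : ∀ A ∈ F, ∀ A' ∈ F, A ≠ A' → Disjoint (R A) (R A') := by
    intro A hA A' hA' hne
    rw [Finset.disjoint_left]
    intro X hX hX'
    rw [hR] at hX hX'
    obtain ⟨Z, hZ, rfl⟩ := Finset.mem_image.1 hX
    obtain ⟨Z', hZ', heq⟩ := Finset.mem_image.1 hX'
    rw [Finset.mem_powerset] at hZ hZ'
    have h1 : A' ⊆ A ∪ Z := by
      rw [← heq]; exact Finset.subset_union_left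
    have h2 : A ⊆ A' ∪ Z' := by
      rw [heq]; exact Finset.subset_union_left
    have hAA' : A' ⊆ A := interior' hF hA hZ hA' h1
    have hA'A : A ⊆ A' := interior' hF hA' hZ' hA h2
    exact hne (Finset.Subset.antisymm hA'A hAA')
  calc ∑ A ∈ F, 2 ^ ((U \ A) \ tr F A).card
      = ∑ A ∈ F, (R A).card := by
        refine Finset.sum_congr rfl ?_
        intro A hA; rw [hcard A hA]
    _ = (F.biUnion R).card := (Finset.card_biUnion hdisj).symm
    _ ≤ U.powerset.card := by
        refine Finset.card_le_card ?_
        intro X hX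
        obtain ⟨A, hA, hXA⟩ := Finset.mem_biUnion.1 hX
        exact hmem A hA hXA
    _ = 2 ^ U.card := Finset.card_powerset U

lemma covered_union_eq {F : Finset (Finset ℕ)} (hF : UnionClosed F) {B A1 A2 : Finset ℕ}
    (h1 : A1 ∈ F) (h2 : A2 ∈ F) (hc1 : B ∈ covers F A1) (hc2 : B ∈ covers F A2)
    (hne : A1 ≠ A2) : A1 ∪ A2 = B := by
  rw [covers, Finset.mem_filter] at hc1 hc2
  have hU : A1 ∪ A2 ∈ F := hF A1 h1 A2 h2
  have hsub : A1 ∪ A2 ⊆ B := Finset.union_subset hc1.2.1.subset hc2.2.1.subset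
  by_cases hs : A1 ⊂ A1 ∪ A2
  · -- minimality of B over A1 : ¬ (A1 ∪ A2) ⊂ B
    have hnot := hc1.2.2 (A1 ∪ A2) hU hs
    rcases eq_or_ne (A1 ∪ A2) B with h | h
    · exact h
    · exact absurd (Finset.ssubset_iff_subset_ne.2 ⟨hsub, h⟩) hnot
  · -- A1 ∪ A2 = A1, so A2 ⊊ A1 ⊂ B, contradicting minimality of B over A2
    have hA2A1 : A2 ⊆ A1 := by
      intro x hx
      by_contra hxA1
      exact hs (Finset.ssubset_iff_of_subset Finset.subset_union_left |>.2
        ⟨x, Finset.mem_union_right _ hx, hxA1⟩)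
    have : A2 ⊂ A1 := Finset.ssubset_iff_subset_ne.2 ⟨hA2A1, fun h => hne h.symm⟩
    exact absurd hc1.2.1 (hc2.2.2 A1 h1 this)

lemma covered_card_le {F : Finset (Finset ℕ)} (hF : UnionClosed F) {B : Finset ℕ} :
    (F.filter (fun A => B ∈ covers F A)).card ≤ B.card := by
  classical
  set cov := F.filter (fun A => B ∈ covers F A) with hcov
  have hne : ∀ A ∈ cov, (B \ A).Nonempty := by
    intro A hA
    rw [hcov, Finset.mem_filter, covers, Finset.mem_filter] at hA
    obtain ⟨x, hxB, hxA⟩ := Finset.exists_of_ssubset hA.2.2.1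
    exact ⟨x, Finset.mem_sdiff.2 ⟨hxB, hxA⟩⟩
  have hdisj : ∀ A1 ∈ cov, ∀ A2 ∈ cov, A1 ≠ A2 → Disjoint (B \ A1) (B \ A2) := by
    intro A1 h1 A2 h2 hne12
    rw [hcov, Finset.mem_filter] at h1 h2
    have := covered_union_eq hF h1.1 h2.1 h1.2 h2.2 hne12
    rw [Finset.disjoint_left]
    intro x hx1 hx2
    rw [Finset.mem_sdiff] at hx1 hx2
    have : x ∈ A1 ∪ A2 := this.symm ▸ hx1.1
    rcases Finset.mem_union.1 this with h | h
    · exact hx1.2 h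
    · exact hx2.2 h
  calc cov.card = ∑ A ∈ cov, 1 := (Finset.card_eq_sum_ones _)
    _ ≤ ∑ A ∈ cov, (B \ A).card := by
        refine Finset.sum_le_sum ?_
        intro A hA
        exact Nat.one_le_iff_ne_zero.2 (Finset.card_ne_zero_of_mem ((hne A hA).choose_spec))
    _ = (cov.biUnion (fun A => B \ A)).card := (Finset.card_biUnion hdisj).symm
    _ ≤ B.card := by
        refine Finset.card_le_card ?_
        intro x hx
        obtain ⟨A, hA, hxA⟩ := Finset.mem_biUnion.1 hx
        exact (Finset.mem_sdiff.1 hxA).1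

lemma sum_covers_card_le {F : Finset (Finset ℕ)} (hF : UnionClosed F) :
    ∑ A ∈ F, ((covers F A).card : ℝ) ≤ ∑ B ∈ F, (B.card : ℝ) := by
  classical
  have key : ∑ A ∈ F, (covers F A).card ≤ ∑ B ∈ F, B.card := by
    have swap : ∑ A ∈ F, (covers F A).card
        = ∑ B ∈ F, (F.filter (fun A => B ∈ covers F A)).card := by
      simp only [Finset.card_filter]
      rw [Finset.sum_comm]
      refine Finset.sum_congr rfl ?_
      intro A hA
      have heq : F.filter (fun B => B ∈ covers F A) = covers F A := by
        ext B
        simp only [Finset.mem_filter, covers, and_comm]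
        tauto
      rw [← heq, Finset.card_filter]
      refine Finset.sum_congr rfl ?_
      intro B hB
      congr 1
      simp [heq]
    rw [swap]
    exact Finset.sum_le_sum (fun B hB => covered_card_le hF)
  calc ∑ A ∈ F, ((covers F A).card : ℝ) = ((∑ A ∈ F, (covers F A).card : ℕ) : ℝ) := by push_cast; ring
    _ ≤ ((∑ B ∈ F, B.card : ℕ) : ℝ) := by exact_mod_cast key
    _ = ∑ B ∈ F, (B.card : ℝ) := by push_cast; ring

theorem reimer {F : Finset (Finset ℕ)} (hF : UnionClosed F) :
    (F.card : ℝ) * logb 2 (F.card) ≤ 2 * ∑ A ∈ F, (A.card : ℝ) := by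
  classical
  rcases F.eq_empty_or_nonempty with rfl | hne
  · simp
  set U := F.sup id with hU
  set n := U.card with hn
  set m := F.card with hm
  have hm1 : 1 ≤ m := Finset.card_pos.2 hne
  have hmR : (0:ℝ) < m := by exact_mod_cast hm1
  set e : Finset ℕ → ℕ := fun A => ((U \ A) \ tr F A).card with he
  have hkey : ∀ A ∈ F, (e A : ℝ) = (n : ℝ) - (tr F A).card - A.card := by
    intro A hA
    have h1 : ((U \ A) \ tr F A).card + (tr F A).card = (U \ A).card :=
      Finset.card_sdiff_add_card_eq_card tr_subset
    have h2 : (U \ A).card + A.card = U.card :=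
      Finset.card_sdiff_add_card_eq_card (subset_sup hA)
    have := congrArg (fun x : ℕ => (x : ℝ)) h1
    have h2' := congrArg (fun x : ℕ => (x : ℝ)) h2
    push_cast at this h2'
    simp only [he]
    linarith
  have hsum : ∑ A ∈ F, (2:ℝ) ^ (e A) ≤ (2:ℝ) ^ n := by
    have := sum_pow_le hF
    exact_mod_cast this
  -- AM-GM
  have hgm : (2:ℝ) ^ ((∑ A ∈ F, (e A : ℝ)) / m) ≤ (2:ℝ) ^ (n:ℝ) / m := by
    have hw : ∀ A ∈ F, (0:ℝ) ≤ 1/m := fun _ _ => by positivity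
    have hw1 : ∑ A ∈ F, (1:ℝ)/m = 1 := by
      rw [Finset.sum_const, hm]
      rw [nsmul_eq_mul]; exact mul_one_div_cancel (ne_of_gt hmR)
    have hz : ∀ A ∈ F, (0:ℝ) ≤ (2:ℝ) ^ (e A) := fun _ _ => by positivity
    have := Real.geom_mean_le_arith_mean_weighted F (fun _ => 1/m)
      (fun A => (2:ℝ) ^ (e A)) hw hw1 hz
    have hL : ∏ A ∈ F, ((2:ℝ) ^ (e A)) ^ ((1:ℝ)/m)
        = (2:ℝ) ^ ((∑ A ∈ F, (e A : ℝ)) / m) := by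
      have : ∀ A ∈ F, ((2:ℝ) ^ (e A)) ^ ((1:ℝ)/m)
          = Real.exp (Real.log 2 * ((e A : ℝ)/m)) := by
        intro A _
        rw [← Real.rpow_natCast (2:ℝ) (e A), ← Real.rpow_mul (by norm_num)]
        rw [Real.rpow_def_of_pos (by norm_num)]
        try congr 1
        try ring
      rw [Finset.prod_congr rfl this, ← Real.exp_sum]
      rw [Real.rpow_def_of_pos (by norm_num : (0:ℝ) < 2)]
      congr 1
      rw [← Finset.mul_sum, Finset.sum_div]
      try ring
    rw [hL] at this
    refine this.trans ?_
    rw [← Finset.mul_sum]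
    have h2n : ∑ A ∈ F, (2:ℝ) ^ (e A) ≤ (2:ℝ) ^ (n:ℝ) := by
      rw [Real.rpow_natCast]
      exact hsum
    calc (1:ℝ)/m * ∑ A ∈ F, (2:ℝ) ^ (e A) ≤ 1/m * (2:ℝ)^(n:ℝ) := by
          refine mul_le_mul_of_nonneg_left h2n (by positivity)
      _ = (2:ℝ)^(n:ℝ)/m := by ring
  -- take logs
  have hlog : (∑ A ∈ F, (e A : ℝ)) / m ≤ (n : ℝ) - logb 2 m := by
    have h1 : logb 2 ((2:ℝ) ^ ((∑ A ∈ F, (e A : ℝ)) / m)) ≤ logb 2 ((2:ℝ) ^ (n:ℝ) / m) :=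
      Real.logb_le_logb_of_le one_lt_two (by positivity) hgm
    rw [Real.logb_rpow (by norm_num) (by norm_num), Real.logb_div (by positivity) (ne_of_gt hmR)] at h1
    rw [Real.logb_rpow (by norm_num) (by norm_num)] at h1
    exact h1
  have hmain : (m : ℝ) * logb 2 m ≤ ∑ A ∈ F, ((tr F A).card + A.card : ℝ) := by
    have h2 : (∑ A ∈ F, (e A : ℝ)) ≤ m * ((n:ℝ) - logb 2 m) := by
      have := mul_le_mul_of_nonneg_left hlog (le_of_lt hmR)
      rwa [mul_div_cancel₀ _ (ne_of_gt hmR)] at this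
    have h3 : ∑ A ∈ F, (e A : ℝ) = m * n - ∑ A ∈ F, ((tr F A).card + A.card : ℝ) := by
      rw [Finset.sum_congr rfl hkey]
      rw [Finset.sum_sub_distrib, Finset.sum_sub_distrib, Finset.sum_const, hm]
      push_cast
      rw [Finset.sum_add_distrib]
      ring
    nlinarith [h2, h3]
  refine hmain.trans ?_
  have h4 : ∑ A ∈ F, ((tr F A).card + A.card : ℝ)
      ≤ ∑ A ∈ F, ((covers F A).card : ℝ) + ∑ A ∈ F, (A.card : ℝ) := by
    rw [← Finset.sum_add_distrib]
    refine Finset.sum_le_sum ?_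
    intro A hA
    have : (tr F A).card ≤ (covers F A).card := Finset.card_image_le
    have := (Nat.cast_le (α := ℝ)).2 this
    linarith
  refine h4.trans ?_
  have h5 := sum_covers_card_le hF
  linarith

lemma log_step {n : ℕ} {m : ℝ} (hn : 2 ≤ n) (hm : m ≤ (n : ℝ) - 1) (hm0 : 0 ≤ m) :
    m * logb 2 n ≤ m * logb 2 ((n : ℝ) - 1) + 2 := by
  have ht : (1:ℝ) ≤ (n:ℝ) - 1 := by
    have : (2:ℝ) ≤ n := by exact_mod_cast hn
    linarith
  have htpos : (0:ℝ) < (n:ℝ) - 1 := by linarith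
  have hnpos : (0:ℝ) < (n:ℝ) := by linarith
  have hdiff : logb 2 n - logb 2 ((n:ℝ)-1) = logb 2 ((n:ℝ)/((n:ℝ)-1)) := by
    rw [Real.logb_div (ne_of_gt hnpos) (ne_of_gt htpos)]
  have hlogle : logb 2 ((n:ℝ)/((n:ℝ)-1)) ≤ 1/(((n:ℝ)-1) * Real.log 2) := by
    rw [Real.logb, div_le_div_iff₀ (Real.log_pos one_lt_two) (by positivity)]
    have h1 : Real.log ((n:ℝ)/((n:ℝ)-1)) ≤ (n:ℝ)/((n:ℝ)-1) - 1 :=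
      Real.log_le_sub_one_of_pos (by positivity)
    have h2 : (n:ℝ)/((n:ℝ)-1) - 1 = 1/((n:ℝ)-1) := by
      field_simp; ring
    calc Real.log ((n:ℝ)/((n:ℝ)-1)) * (((n:ℝ)-1) * Real.log 2)
        ≤ (1/((n:ℝ)-1)) * (((n:ℝ)-1) * Real.log 2) := by
          refine mul_le_mul_of_nonneg_right ?_ (by positivity)
          rw [← h2]; exact h1
      _ = 1 * Real.log 2 := by field_simp
  have hlognn : 0 ≤ logb 2 ((n:ℝ)/((n:ℝ)-1)) := by
    refine Real.logb_nonneg one_lt_two ?_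
    rw [le_div_iff₀ htpos]; linarith
  have key : m * (logb 2 n - logb 2 ((n:ℝ)-1)) ≤ 2 := by
    rw [hdiff]
    calc m * logb 2 ((n:ℝ)/((n:ℝ)-1)) ≤ ((n:ℝ)-1) * logb 2 ((n:ℝ)/((n:ℝ)-1)) :=
          mul_le_mul_of_nonneg_right hm hlognn
      _ ≤ ((n:ℝ)-1) * (1/(((n:ℝ)-1) * Real.log 2)) :=
          mul_le_mul_of_nonneg_left hlogle (by linarith)
      _ = 1/Real.log 2 := by field_simp
      _ ≤ 2 := by
          rw [div_le_iff₀ (Real.log_pos one_lt_two)]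
          have := Real.log_two_gt_d9
          linarith
  linarith [key, mul_sub m (logb 2 (n:ℝ)) (logb 2 ((n:ℝ)-1))]

lemma erase_union_eq (A B : Finset ℕ) (x : ℕ) :
    (A ∪ B).erase x = A.erase x ∪ B.erase x := by
  ext z; simp only [Finset.mem_erase, Finset.mem_union]; tauto

lemma erase_image_unionClosed {G : Finset (Finset ℕ)} (hG : UnionClosed G) (x : ℕ) :
    UnionClosed (G.image (fun A => A.erase x)) := by
  intro A' hA' B' hB'
  obtain ⟨A, hA, rfl⟩ := Finset.mem_image.1 hA'
  obtain ⟨B, hB, rfl⟩ := Finset.mem_image.1 hB'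
  exact Finset.mem_image.2 ⟨A ∪ B, hG A hA B hB, (erase_union_eq A B x)⟩

lemma card_erase_real {A : Finset ℕ} {x : ℕ} :
    ((A.erase x).card : ℝ) = (A.card : ℝ) - (if x ∈ A then 1 else 0) := by
  by_cases hx : x ∈ A
  · rw [Finset.card_erase_of_mem hx, if_pos hx]
    have : 1 ≤ A.card := Finset.card_pos.2 ⟨x, hx⟩
    push_cast [Nat.cast_sub this]
    ring
  · rw [Finset.erase_eq_of_notMem hx, if_neg hx]
    ring

theorem density_lower : ∀ n : ℕ, ∀ F : Finset (Finset ℕ), UnionClosed F →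
    (F.sup id).card = n → (F.card : ℝ) * logb 2 n ≤ 2 * ∑ A ∈ F, (A.card : ℝ) := by
  intro N
  induction N using Nat.strong_induction_on with
  | _ n IH =>
  intro F hF hn
  classical
  have hsumnn : (0:ℝ) ≤ ∑ A ∈ F, (A.card : ℝ) :=
    Finset.sum_nonneg (fun _ _ => by positivity)
  rcases F.eq_empty_or_nonempty with rfl | hne
  · simp
  have hm1 : 1 ≤ F.card := Finset.card_pos.2 hne
  by_cases hncase : n ≤ F.card
  · -- Reimer case
    have h1 : logb 2 (n:ℝ) ≤ logb 2 (F.card : ℝ) := by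
      rcases Nat.eq_zero_or_pos n with rfl | hnpos
      · simpa using Real.logb_nonneg one_lt_two (by exact_mod_cast hm1)
      · exact Real.logb_le_logb_of_le one_lt_two (by exact_mod_cast hnpos)
          (by exact_mod_cast hncase)
    calc (F.card:ℝ) * logb 2 n ≤ (F.card:ℝ) * logb 2 (F.card) :=
          mul_le_mul_of_nonneg_left h1 (by positivity)
      _ ≤ 2 * ∑ A ∈ F, (A.card:ℝ) := reimer hF
  · push_neg at hncase
    have hn2 : 2 ≤ n := by omega
    set U := F.sup id with hUdef
    have hUne : U.Nonempty := Finset.card_pos.1 (by omega)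
    obtain ⟨x, hxU, hxmin⟩ :=
      Finset.exists_min_image U (fun y => (F.filter (fun A => y ∈ A)).card) hUne
    have hfrx : 1 ≤ (F.filter (fun A => x ∈ A)).card := by
      obtain ⟨A, hA, hxA⟩ := Finset.mem_sup.1 hxU
      exact Finset.card_pos.2 ⟨A, Finset.mem_filter.2 ⟨hA, hxA⟩⟩
    have hn1cast : ((n-1 : ℕ) : ℝ) = (n:ℝ) - 1 := by
      have h1n : 1 ≤ n := by omega
      push_cast [Nat.cast_sub h1n]
      ring
    have hfinal : (F.card:ℝ) * logb 2 (n:ℝ) ≤ (F.card:ℝ) * logb 2 (((n-1:ℕ)):ℝ) + 2 := by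
      rw [hn1cast]
      refine log_step hn2 ?_ (by positivity)
      have : (F.card:ℝ) + 1 ≤ (n:ℝ) := by exact_mod_cast hncase
      linarith
    -- it suffices to prove: F.card * logb 2 (n-1) + 2 ≤ 2 * Σ
    have hsuffices : ∀ (_ : (F.card:ℝ) * logb 2 (((n-1:ℕ)):ℝ) + 2 ≤ 2 * ∑ A ∈ F, (A.card : ℝ)),
        (F.card : ℝ) * logb 2 n ≤ 2 * ∑ A ∈ F, (A.card : ℝ) := fun h => le_trans hfinal h
    refine hsuffices ?_
    have hn1lt : n - 1 < n := by omega
    by_cases htwin : ∃ y ∈ U, y ≠ x ∧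
        F.filter (fun A => y ∈ A) = F.filter (fun A => x ∈ A)
    · -- twin collapse
      obtain ⟨y, hyU, hyne, hyx⟩ := htwin
      set G := F.image (fun A => A.erase x) with hGdef
      have hinj : Set.InjOn (fun A : Finset ℕ => A.erase x) (F : Set (Finset ℕ)) := by
        intro A hA B hB hAB
        simp only at hAB
        by_cases hxA : x ∈ A <;> by_cases hxB : x ∈ B
        · rw [← Finset.insert_erase hxA, ← Finset.insert_erase hxB, hAB]
        · exfalso
          have hyA : y ∈ A := by
            have : A ∈ F.filter (fun A => x ∈ A) := Finset.mem_filter.2 ⟨hA, hxA⟩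
            rw [← hyx] at this
            exact (Finset.mem_filter.1 this).2
          have : y ∈ A.erase x := Finset.mem_erase.2 ⟨hyne, hyA⟩
          rw [hAB] at this
          have hyB : y ∈ B := Finset.mem_of_mem_erase this
          have : B ∈ F.filter (fun A => x ∈ A) := by
            rw [← hyx]; exact Finset.mem_filter.2 ⟨hB, hyB⟩
          exact hxB (Finset.mem_filter.1 this).2
        · exfalso
          have hyB : y ∈ B := by
            have : B ∈ F.filter (fun A => x ∈ A) := Finset.mem_filter.2 ⟨hB, hxB⟩
            rw [← hyx] at this
            exact (Finset.mem_filter.1 this).2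
          have : y ∈ B.erase x := Finset.mem_erase.2 ⟨hyne, hyB⟩
          rw [← hAB] at this
          have hyA : y ∈ A := Finset.mem_of_mem_erase this
          have : A ∈ F.filter (fun A => x ∈ A) := by
            rw [← hyx]; exact Finset.mem_filter.2 ⟨hA, hyA⟩
          exact hxA (Finset.mem_filter.1 this).2
        · rw [← Finset.erase_eq_of_notMem hxA, ← Finset.erase_eq_of_notMem hxB, hAB]
      have hGcard : G.card = F.card := Finset.card_image_of_injOn hinj
      have hGU : UnionClosed G := erase_image_unionClosed hF x
      have hGsup : G.sup id = U.erase x := by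
        apply le_antisymm
        · refine Finset.sup_le ?_
          intro A' hA'
          obtain ⟨A, hA, rfl⟩ := Finset.mem_image.1 hA'
          exact Finset.erase_subset_erase x (subset_sup hA)
        · have hUF : U ∈ F := sup_mem hF hne
          exact Finset.le_sup (f := id) (Finset.mem_image_of_mem _ hUF)
      have hGsupcard : (G.sup id).card = n - 1 := by
        rw [hGsup, Finset.card_erase_of_mem hxU, hn]
      have hIH := IH (n-1) hn1lt G hGU hGsupcard
      have hGsum : ∑ A' ∈ G, ((A'.card) : ℝ) = ∑ A ∈ F, ((A.erase x).card : ℝ) := by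
        rw [hGdef]
        rw [Finset.sum_image (fun A hA B hB h => hinj hA hB h)]
      have hsplit : ∑ A ∈ F, ((A.erase x).card : ℝ)
          = ∑ A ∈ F, (A.card : ℝ) - (F.filter (fun A => x ∈ A)).card := by
        rw [Finset.sum_congr rfl (fun A _ => card_erase_real (A := A) (x := x))]
        rw [Finset.sum_sub_distrib]
        congr 1
        rw [Finset.card_filter]
        push_cast
        rfl
      rw [hGcard, hGsum, hsplit] at hIH
      have : (1:ℝ) ≤ (F.filter (fun A => x ∈ A)).card := by exact_mod_cast hfrx
      linarith
    · -- no twin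
      set F1p := F.filter (fun A => x ∈ A) with hF1pdef
      set F0 := F.filter (fun A => ¬ x ∈ A) with hF0def
      have hUCF1p : UnionClosed F1p := by
        intro A hA B hB
        rw [Finset.mem_filter] at hA hB ⊢
        exact ⟨hF A hA.1 B hB.1, Finset.mem_union_left _ hA.2⟩
      set G1 := F1p.image (fun A => A.erase x) with hG1def
      have hinj1 : Set.InjOn (fun A : Finset ℕ => A.erase x) (F1p : Set (Finset ℕ)) := by
        intro A hA B hB hAB
        simp only at hAB
        have hxA : x ∈ A := (Finset.mem_filter.1 hA).2
        have hxB : x ∈ B := (Finset.mem_filter.1 hB).2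
        rw [← Finset.insert_erase hxA, ← Finset.insert_erase hxB, hAB]
      have hG1card : G1.card = F1p.card := Finset.card_image_of_injOn hinj1
      have hG1UC : UnionClosed G1 := erase_image_unionClosed hUCF1p x
      have hUF : U ∈ F := sup_mem hF hne
      have hUF1p : U ∈ F1p := Finset.mem_filter.2 ⟨hUF, hxU⟩
      have hG1sup : G1.sup id = U.erase x := by
        apply le_antisymm
        · refine Finset.sup_le ?_
          intro A' hA'
          obtain ⟨A, hA, rfl⟩ := Finset.mem_image.1 hA'
          exact Finset.erase_subset_erase x (subset_sup (Finset.mem_of_mem_filter A hA))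
        · exact Finset.le_sup (f := id) (Finset.mem_image_of_mem _ hUF1p)
      have hG1supcard : (G1.sup id).card = n - 1 := by
        rw [hG1sup, Finset.card_erase_of_mem hxU, hn]
      have hIH1 := IH (n-1) hn1lt G1 hG1UC hG1supcard
      have hG1sum : ∑ A' ∈ G1, ((A'.card) : ℝ)
          = ∑ A ∈ F1p, (A.card : ℝ) - F1p.card := by
        rw [hG1def, Finset.sum_image (fun A hA B hB h => hinj1 hA hB h)]
        have : ∀ A ∈ F1p, ((A.erase x).card : ℝ) = (A.card : ℝ) - 1 := by
          intro A hA
          rw [card_erase_real, if_pos (Finset.mem_filter.1 hA).2]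
        rw [Finset.sum_congr rfl this, Finset.sum_sub_distrib, Finset.sum_const]
        push_cast
        ring
      rw [hG1card, hG1sum] at hIH1
      have hfrx' : (1:ℝ) ≤ (F1p.card : ℝ) := by exact_mod_cast hfrx
      by_cases hF0e : F0 = ∅
      · -- every set contains x
        have hallx : F1p = F := by
          rw [hF1pdef]
          refine Finset.filter_eq_self.2 ?_
          intro A hA
          by_contra hxA
          have : A ∈ F0 := Finset.mem_filter.2 ⟨hA, hxA⟩
          rw [hF0e] at this
          exact absurd this (Finset.notMem_empty A)
        rw [hallx] at hIH1
        have h2m : (2:ℝ) ≤ 2 * (F.card:ℝ) := by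
          have : (1:ℝ) ≤ (F.card:ℝ) := by exact_mod_cast hm1
          linarith
        rw [hallx] at hfrx'
        linarith
      · -- F0 nonempty
        have hF0ne : F0.Nonempty := Finset.nonempty_of_ne_empty hF0e
        have hUCF0 : UnionClosed F0 := by
          intro A hA B hB
          rw [Finset.mem_filter] at hA hB ⊢
          refine ⟨hF A hA.1 B hB.1, ?_⟩
          intro hx
          rcases Finset.mem_union.1 hx with h | h
          · exact hA.2 h
          · exact hB.2 h
        have hF0sup : F0.sup id = U.erase x := by
          apply le_antisymm
          · refine Finset.sup_le ?_
            intro A hA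
            rw [Finset.mem_filter] at hA
            exact Finset.subset_erase.2 ⟨subset_sup hA.1, hA.2⟩
          · intro y hy
            rw [Finset.mem_erase] at hy
            by_contra hynotin
            have hsubfil : F.filter (fun A => y ∈ A) ⊆ F.filter (fun A => x ∈ A) := by
              intro A hA
              rw [Finset.mem_filter] at hA ⊢
              refine ⟨hA.1, ?_⟩
              by_contra hxA
              have hAF0 : A ∈ F0 := Finset.mem_filter.2 ⟨hA.1, hxA⟩
              exact hynotin (Finset.mem_sup.2 ⟨A, hAF0, hA.2⟩)
            have hcardle := hxmin y hy.2
            have heq := Finset.eq_of_subset_of_card_le hsubfil hcardle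
            exact htwin ⟨y, hy.2, hy.1, heq⟩
        have hF0supcard : (F0.sup id).card = n - 1 := by
          rw [hF0sup, Finset.card_erase_of_mem hxU, hn]
        have hIH0 := IH (n-1) hn1lt F0 hUCF0 hF0supcard
        have hcardsplit : (F1p.card : ℝ) + (F0.card : ℝ) = (F.card : ℝ) := by
          have := Finset.card_filter_add_card_filter_not
            (s := F) (p := fun A => x ∈ A)
          exact_mod_cast this
        have hsumsplit : ∑ A ∈ F1p, (A.card:ℝ) + ∑ A ∈ F0, (A.card:ℝ)
            = ∑ A ∈ F, (A.card:ℝ) := by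
          exact Finset.sum_filter_add_sum_filter_not F _ _
        nlinarith [hIH0, hIH1, hfrx', hcardsplit, hsumsplit]

lemma density_nonneg (F : Finset (Finset ℕ)) : 0 ≤ density F := by
  rw [density]
  have h1 : (0:ℝ) ≤ ∑ A ∈ F, (A.card : ℝ) := Finset.sum_nonneg (fun _ _ => by positivity)
  positivity

lemma minDensity_bddBelow (k : ℕ) :
    BddBelow {d : ℝ | ∃ F : Finset (Finset ℕ),
      UnionClosed F ∧ (F.sup id).card = k ∧ d = density F} := by
  refine ⟨0, ?_⟩
  rintro d ⟨F, -, -, rfl⟩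
  exact density_nonneg F

lemma minDensity_le {G : Finset (Finset ℕ)} {k : ℕ} (hG : UnionClosed G)
    (hcard : (G.sup id).card = k) : minDensity k ≤ density G :=
  csInf_le (minDensity_bddBelow k) ⟨G, hG, hcard, rfl⟩

lemma le_minDensity {k : ℕ} (hk : 1 ≤ k) :
    Real.logb 2 (k : ℝ) / (2 * (k : ℝ)) ≤ minDensity k := by
  have hkR : (0:ℝ) < k := by exact_mod_cast hk
  refine le_csInf ?_ ?_
  · refine ⟨density {Finset.range k}, {Finset.range k}, ?_, ?_, rfl⟩
    · intro A hA B hB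
      simp only [Finset.mem_singleton] at hA hB
      subst hA; subst hB; simp
    · simp
  · rintro d ⟨G, hG, hcard, rfl⟩
    have hGne : G.Nonempty := by
      rcases G.eq_empty_or_nonempty with rfl | h
      · simp at hcard; omega
      · exact h
    have hmpos : (0:ℝ) < G.card := by exact_mod_cast Finset.card_pos.2 hGne
    have hDL := density_lower k G hG hcard
    rw [density, hcard]
    rw [div_le_div_iff₀ (by positivity) (by positivity)]
    nlinarith [hDL, hkR, hmpos]


/-- If `k ≥ 1` is the minimum cardinality of a nonempty set of `F`, then
`max_{a ∈ ⋃F} |F_a| ≥ s_k·|F| ≥ (log₂ k/(2k))·|F|`. -/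
theorem stmt_11 (F : Finset (Finset ℕ)) (hUC : UnionClosed F)
    (k : ℕ) (hk1 : 1 ≤ k) (hk : ∃ S ∈ F, S.Nonempty ∧ S.card = k)
    (hkmin : ∀ S ∈ F, S.Nonempty → k ≤ S.card) :
    (∃ a ∈ F.sup id, ((F.filter (fun S => a ∈ S)).card : ℝ) ≥
        minDensity k * (F.card : ℝ)) ∧
      minDensity k * (F.card : ℝ) ≥
        (Real.logb 2 (k : ℝ) / (2 * (k : ℝ))) * (F.card : ℝ) := by
  classical
  obtain ⟨S, hSF, hSne, hScard⟩ := hk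
  have hFne : F.Nonempty := ⟨S, hSF⟩
  have hm1 : 1 ≤ F.card := Finset.card_pos.2 hFne
  have hkR : (0:ℝ) < k := by exact_mod_cast hk1
  constructor
  · -- existence of a frequent element
    set md := minDensity k with hmddef
    have hkey : md * k * F.card ≤ ∑ A ∈ F, ((A ∩ S).card : ℝ) := by
      set t := F.image (fun A => A ∪ S) with ht
      have hmaps : ∀ A ∈ F, A ∪ S ∈ t := fun A hA => Finset.mem_image_of_mem _ hA
      have hfib := Finset.sum_fiberwise_of_maps_to hmaps (fun A => ((A ∩ S).card : ℝ))
      have hfib1 := Finset.sum_fiberwise_of_maps_to hmaps (fun _ => (1:ℝ))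
      have hper : ∀ C ∈ t, md * k * ((F.filter (fun A => A ∪ S = C)).card : ℝ)
          ≤ ∑ A ∈ F.filter (fun A => A ∪ S = C), ((A ∩ S).card : ℝ) := by
        intro C hC
        obtain ⟨A₀, hA₀, rfl⟩ := Finset.mem_image.1 hC
        set C := A₀ ∪ S
        set cls := F.filter (fun A => A ∪ S = C) with hcls
        have hCF : C ∈ F := hUC A₀ hA₀ S hSF
        have hSC : S ⊆ C := Finset.subset_union_right
        have hCcls : C ∈ cls := by
          rw [hcls, Finset.mem_filter]
          exact ⟨hCF, Finset.union_eq_left.2 hSC⟩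
        have hclscard : 1 ≤ cls.card := Finset.card_pos.2 ⟨C, hCcls⟩
        have hinj : Set.InjOn (fun A : Finset ℕ => A ∩ S) (cls : Set (Finset ℕ)) := by
          intro A hA B hB hAB
          simp only [Finset.mem_coe, hcls, Finset.mem_filter] at hA hB
          simp only at hAB
          ext z
          by_cases hzS : z ∈ S
          · constructor
            · intro hzA
              have : z ∈ A ∩ S := Finset.mem_inter.2 ⟨hzA, hzS⟩
              rw [hAB] at this
              exact (Finset.mem_inter.1 this).1
            · intro hzB
              have : z ∈ B ∩ S := Finset.mem_inter.2 ⟨hzB, hzS⟩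
              rw [← hAB] at this
              exact (Finset.mem_inter.1 this).1
          · constructor
            · intro hzA
              have : z ∈ B ∪ S := by rw [hB.2, ← hA.2]; exact Finset.mem_union_left _ hzA
              rcases Finset.mem_union.1 this with h | h
              · exact h
              · exact absurd h hzS
            · intro hzB
              have : z ∈ A ∪ S := by rw [hA.2, ← hB.2]; exact Finset.mem_union_left _ hzB
              rcases Finset.mem_union.1 this with h | h
              · exact h
              · exact absurd h hzS
        set H := cls.image (fun A => A ∩ S) with hH
        have hHcard : H.card = cls.card := Finset.card_image_of_injOn hinj
        have hHUC : UnionClosed H := by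
          intro T1 hT1 T2 hT2
          obtain ⟨A1, hA1, rfl⟩ := Finset.mem_image.1 hT1
          obtain ⟨A2, hA2, rfl⟩ := Finset.mem_image.1 hT2
          rw [hcls, Finset.mem_filter] at hA1 hA2
          refine Finset.mem_image.2 ⟨A1 ∪ A2, ?_, ?_⟩
          · rw [hcls, Finset.mem_filter]
            refine ⟨hUC A1 hA1.1 A2 hA2.1, ?_⟩
            have : (A1 ∪ A2) ∪ S = (A1 ∪ S) ∪ (A2 ∪ S) := by
              ext z; simp only [Finset.mem_union]; tauto
            rw [this, hA1.2, hA2.2, Finset.union_self]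
          · ext z; simp only [Finset.mem_inter, Finset.mem_union]; tauto
        have hHsup : H.sup id = S := by
          apply le_antisymm
          · refine Finset.sup_le ?_
            intro T hT
            obtain ⟨A, hA, rfl⟩ := Finset.mem_image.1 hT
            exact Finset.inter_subset_right
          · have hSH : S ∈ H := by
              refine Finset.mem_image.2 ⟨C, hCcls, ?_⟩
              exact Finset.inter_eq_right.2 hSC
            exact Finset.le_sup (f := id) hSH
        have hHsupcard : (H.sup id).card = k := by rw [hHsup, hScard]
        have hmdle : md ≤ density H := minDensity_le hHUC hHsupcard
        rw [density, hHsupcard, hHcard] at hmdle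
        have hsum_eq : ∑ T ∈ H, ((T.card):ℝ) = ∑ A ∈ cls, ((A ∩ S).card : ℝ) := by
          rw [hH, Finset.sum_image (fun A hA B hB h => hinj hA hB h)]
        have hclspos : (0:ℝ) < cls.card := by exact_mod_cast hclscard
        rw [le_div_iff₀ (by positivity : (0:ℝ) < (k:ℝ) * cls.card)] at hmdle
        nlinarith [hmdle, hsum_eq]
      calc md * k * (F.card : ℝ)
          = ∑ C ∈ t, md * k * ((F.filter (fun A => A ∪ S = C)).card : ℝ) := by
            rw [← Finset.mul_sum]
            congr 1
            have : ∑ C ∈ t, ((F.filter (fun A => A ∪ S = C)).card : ℝ)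
                = ∑ C ∈ t, ∑ A ∈ F.filter (fun A => A ∪ S = C), (1:ℝ) := by
              refine Finset.sum_congr rfl ?_
              intro C hC
              rw [Finset.sum_const, nsmul_eq_mul, mul_one]
            rw [this, hfib1, Finset.sum_const, nsmul_eq_mul, mul_one]
        _ ≤ ∑ C ∈ t, ∑ A ∈ F.filter (fun A => A ∪ S = C), ((A ∩ S).card : ℝ) :=
            Finset.sum_le_sum hper
        _ = ∑ A ∈ F, ((A ∩ S).card : ℝ) := hfib
    -- double counting
    have hdouble : ∑ a ∈ S, ((F.filter (fun A => a ∈ A)).card : ℝ)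
        = ∑ A ∈ F, ((A ∩ S).card : ℝ) := by
      have hN : ∑ a ∈ S, (F.filter (fun A => a ∈ A)).card
          = ∑ A ∈ F, (A ∩ S).card := by
        simp only [Finset.card_filter]
        rw [Finset.sum_comm]
        refine Finset.sum_congr rfl ?_
        intro A _
        rw [← Finset.card_filter]
        congr 1
        ext a
        simp only [Finset.mem_filter, Finset.mem_inter]
        tauto
      exact_mod_cast hN
    have hsum_lb : ∑ a ∈ S, (fun _ => md * (F.card:ℝ)) a
        ≤ ∑ a ∈ S, ((F.filter (fun A => a ∈ A)).card : ℝ) := by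
      rw [hdouble, Finset.sum_const, hScard, nsmul_eq_mul]
      nlinarith [hkey]
    obtain ⟨a, haS, hle⟩ := Finset.exists_le_of_sum_le hSne hsum_lb
    exact ⟨a, subset_sup hSF haS, hle⟩
  · have h1 := le_minDensity hk1
    have hm0 : (0:ℝ) ≤ F.card := by positivity
    exact mul_le_mul_of_nonneg_right h1 hm0
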